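/- Let α ≥ 0, let q be a real polynomial of degree r ≥ 1 with only real zeros, and suppose the simple set B = {b_k}_{k=0}^∞ satisfies γ_n b_n = q·b_n^{(r)} + α·q'·b_n^{(r−1)} for all n with real numbers γ_n. Then {γ_n} is a B-complex zero decreasing sequence: for every real polynomial g = Σ_{k=0}^m d_k b_k, Z_C(Σ_{k=0}^m γ_k d_k b_k) ≤ Z_C(g). -/

import Mathlib

open Polynomial Finset

open scoped Classical in
/-- Number of non-real complex zeros of a real polynomial, counted with multiplicity. -/
noncomputable def ZC (p : Polynomial ℝ) : ℕ :=
  (((p.map (algebraMap ℝ ℂ)).roots).filter (fun z => z.im ≠ 0)).card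

/-- Number of real zeros of a real polynomial, counted with multiplicity. -/
noncomputable def ZR (p : Polynomial ℝ) : ℕ := p.roots.card

open Set

lemma ZC_zero : ZC 0 = 0 := by simp [ZC]

lemma ZC_add_ZR {p : Polynomial ℝ} (hp : p ≠ 0) : ZC p + ZR p = p.natDegree := by
  classical
  have hmap : p.map (algebraMap ℝ ℂ) ≠ 0 := by
    simpa using (Polynomial.map_ne_zero_iff (algebraMap ℝ ℂ).injective).2 hp
  have htot : p.natDegree = ((p.map (algebraMap ℝ ℂ)).roots).card :=
    by rw [← (IsAlgClosed.splits (p.map (algebraMap ℝ ℂ))).natDegree_eq_card_roots, natDegree_map]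
  have hfilt : ((p.map (algebraMap ℝ ℂ)).roots).filter (fun z => z.im = 0)
      = p.roots.map (fun x : ℝ => (x : ℂ)) := by
    ext w
    rw [Multiset.count_filter]
    by_cases hw : w.im = 0
    · have hw' : w = ((w.re : ℝ) : ℂ) := by
        apply Complex.ext <;> simp [hw]
      rw [if_pos hw]
      rw [hw', Multiset.count_map_eq_count' _ _ (fun a b hab => by exact_mod_cast hab)]
      rw [count_roots, count_roots]
      exact (eq_rootMultiplicity_map (algebraMap ℝ ℂ).injective _).symm
    · rw [if_neg hw]
      symm
      rw [Multiset.count_eq_zero]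
      intro hmem
      obtain ⟨x, _, hx⟩ := Multiset.mem_map.1 hmem
      apply hw; rw [← hx]; simp
  have hZR : ZR p = (((p.map (algebraMap ℝ ℂ)).roots).filter (fun z => z.im = 0)).card := by
    rw [hfilt, Multiset.card_map]; rfl
  have := Multiset.filter_add_not (fun z : ℂ => z.im = 0) ((p.map (algebraMap ℝ ℂ)).roots)
  have hcard := congrArg Multiset.card this
  rw [Multiset.card_add] at hcard
  have hzc : ZC p = (((p.map (algebraMap ℝ ℂ)).roots).filter
      (fun z : ℂ => ¬ z.im = 0)).card := by
    simp only [ZC, ne_eq]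
  rw [hzc, htot, ← hcard, hZR]
  omega

lemma natDegree_derivative_eq' {p : Polynomial ℝ} (hp : derivative p ≠ 0) :
    (derivative p).natDegree = p.natDegree - 1 := by
  have h0 : p.natDegree ≠ 0 := by
    intro h
    exact hp (by rw [Polynomial.eq_C_of_natDegree_eq_zero h]; simp)
  refine le_antisymm (Polynomial.natDegree_derivative_le p) ?_
  apply Polynomial.le_natDegree_of_ne_zero
  rw [Polynomial.coeff_derivative]
  have : p.natDegree - 1 + 1 = p.natDegree := by omega
  rw [this]
  simp only [Polynomial.coeff_natDegree]
  push_cast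
  refine mul_ne_zero (Polynomial.leadingCoeff_ne_zero.2 (fun h => ?_)) (by positivity)
  simp [h] at h0

lemma ZC_derivative_le (p : Polynomial ℝ) : ZC (derivative p) ≤ ZC p := by
  by_cases hd : derivative p = 0
  · rw [hd, ZC_zero]; exact Nat.zero_le _
  have hp : p ≠ 0 := fun h => hd (by simp [h])
  have h1 := ZC_add_ZR hp
  have h2 := ZC_add_ZR hd
  have h3 := Polynomial.card_roots_le_derivative p
  have h4 := natDegree_derivative_eq' hd
  have h5 : ZR p ≤ ZR (derivative p) + 1 := h3
  have h6 : p.natDegree ≠ 0 := by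
    intro h
    exact hd (by rw [Polynomial.eq_C_of_natDegree_eq_zero h]; simp)
  omega


lemma mult_lemma {q h : Polynomial ℝ} (α : ℝ) (a : ℝ)
    (hf : q * derivative h + C α * derivative q * h ≠ 0) :
    rootMultiplicity a q + rootMultiplicity a h
      ≤ rootMultiplicity a (q * derivative h + C α * derivative q * h) + 1 := by
  set μ := rootMultiplicity a q
  set k := rootMultiplicity a h
  have h1 : (X - C a) ^ (μ + k - 1) ∣ q * derivative h := by
    have d1 : (X - C a) ^ μ ∣ q := pow_rootMultiplicity_dvd q a
    have d2 : (X - C a) ^ (k - 1) ∣ derivative h :=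
      pow_sub_one_dvd_derivative_of_pow_dvd (pow_rootMultiplicity_dvd h a)
    have : (X - C a) ^ (μ + k - 1) ∣ (X - C a) ^ (μ + (k - 1)) :=
      pow_dvd_pow _ (by omega)
    exact this.trans (by rw [pow_add]; exact mul_dvd_mul d1 d2)
  have h2 : (X - C a) ^ (μ + k - 1) ∣ C α * derivative q * h := by
    have d1 : (X - C a) ^ (μ - 1) ∣ derivative q :=
      pow_sub_one_dvd_derivative_of_pow_dvd (pow_rootMultiplicity_dvd q a)
    have d2 : (X - C a) ^ k ∣ h := pow_rootMultiplicity_dvd h a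
    have : (X - C a) ^ (μ + k - 1) ∣ (X - C a) ^ (μ - 1 + k) :=
      pow_dvd_pow _ (by omega)
    refine this.trans ?_
    rw [pow_add, mul_comm (C α) (derivative q), mul_assoc]
    exact mul_dvd_mul d1 (Dvd.dvd.mul_left d2 _)
  have := (Polynomial.le_rootMultiplicity_iff hf (n := μ + k - 1) (a := a)).2 (h1.add h2)
  omega

lemma rolle_lemma {q h : Polynomial ℝ} {α : ℝ} (hα : 0 < α) {x y : ℝ} (hxy : x < y)
    (hx : (q * h).eval x = 0) (hy : (q * h).eval y = 0)
    (hmid : ∀ z ∈ Set.Ioo x y, (q * h).eval z ≠ 0) :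
    ∃ c ∈ Set.Ioo x y, (q * derivative h + C α * derivative q * h).eval c = 0 := by
  set w : ℝ → ℝ := fun t => (q.eval t ^ 2) ^ (α / 2) * h.eval t with hw
  have hwc : ContinuousOn w (Icc x y) := by
    apply Continuous.continuousOn
    exact (((q.continuous_aeval).pow 2).rpow_const
      (fun t => Or.inr (by positivity))).mul h.continuous_aeval
  have hzero : ∀ t : ℝ, (q * h).eval t = 0 → w t = 0 := by
    intro t ht
    rw [Polynomial.eval_mul] at ht
    rcases mul_eq_zero.1 ht with h1 | h1
    · simp [hw, h1, Real.zero_rpow (by positivity : α / 2 ≠ 0)]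
    · simp [hw, h1]
  set w' : ℝ → ℝ := fun t => (α / 2) * (q.eval t ^ 2) ^ (α / 2 - 1)
      * (2 * q.eval t * (derivative q).eval t) * h.eval t
      + (q.eval t ^ 2) ^ (α / 2) * (derivative h).eval t with hw'def
  have hderiv : ∀ t ∈ Ioo x y, HasDerivAt w (w' t) t := by
    intro t ht
    have hq : q.eval t ≠ 0 := by
      intro h0
      exact hmid t ht (by simp [Polynomial.eval_mul, h0])
    have h1 : HasDerivAt (fun s => q.eval s ^ 2) (2 * q.eval t * (derivative q).eval t) t := by
      have := (q.hasDerivAt t).fun_pow 2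
      exact this.congr_deriv (by push_cast; ring)
    have h2 := h1.rpow_const (p := α / 2) (Or.inl (by positivity))
    have h3 := h2.fun_mul (h.hasDerivAt t)
    exact h3.congr_deriv (by simp only [hw'def]; ring)
  obtain ⟨c, hc, hc0⟩ := exists_hasDerivAt_eq_zero hxy hwc
    (by rw [hzero x hx, hzero y hy]) hderiv
  refine ⟨c, hc, ?_⟩
  have hq : q.eval c ≠ 0 := by
    intro h0
    exact hmid c hc (by simp [Polynomial.eval_mul, h0])
  have hB : (0:ℝ) < q.eval c ^ 2 := by positivity
  have hkey : (q.eval c ^ 2) ^ (α / 2 - 1) * (q.eval c ^ 2) = (q.eval c ^ 2) ^ (α / 2) := by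
    rw [← Real.rpow_add_one (ne_of_gt hB)]
    ring_nf
  have hBpos : (0:ℝ) < (q.eval c ^ 2) ^ (α / 2) := Real.rpow_pos_of_pos hB _
  simp only [hw'def] at hc0
  have hmul : q.eval c * ((α / 2) * (q.eval c ^ 2) ^ (α / 2 - 1)
      * (2 * q.eval c * (derivative q).eval c) * h.eval c
      + (q.eval c ^ 2) ^ (α / 2) * (derivative h).eval c) = 0 := by rw [hc0]; ring
  have hexp : q.eval c * ((α / 2) * (q.eval c ^ 2) ^ (α / 2 - 1)
      * (2 * q.eval c * (derivative q).eval c) * h.eval c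
      + (q.eval c ^ 2) ^ (α / 2) * (derivative h).eval c)
      = (q.eval c ^ 2) ^ (α / 2) *
        (q.eval c * (derivative h).eval c + α * (derivative q).eval c * h.eval c) := by
    rw [← hkey]; ring
  rw [hexp] at hmul
  have := (mul_eq_zero.1 hmul).resolve_left (ne_of_gt hBpos)
  simp only [Polynomial.eval_add, Polynomial.eval_mul, Polynomial.eval_C]
  linarith [this]

lemma count_lemma {q h : Polynomial ℝ} {α : ℝ} (hα : 0 < α)
    (hq1 : 1 ≤ q.roots.card)
    (hf : q * derivative h + C α * derivative q * h ≠ 0) :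
    q.roots.card + h.roots.card
      ≤ (q * derivative h + C α * derivative q * h).roots.card + 1 := by
  classical
  have hq0 : q ≠ 0 := by
    rintro rfl; simp at hf
  have hh0 : h ≠ 0 := by
    rintro rfl; simp at hf
  set f := q * derivative h + C α * derivative q * h with hfdef
  have hqh0 : q * h ≠ 0 := mul_ne_zero hq0 hh0
  set S : Finset ℝ := (q * h).roots.toFinset with hSdef
  set N := S.card with hNdef
  have hN1 : 1 ≤ N := by
    have : q.roots ≠ 0 := by
      intro h0; rw [h0] at hq1; simp at hq1
    obtain ⟨a, ha⟩ := Multiset.exists_mem_of_ne_zero this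
    have : a ∈ S := by
      rw [hSdef, Multiset.mem_toFinset, roots_mul hqh0, Multiset.mem_add]
      exact Or.inl ha
    exact Finset.card_pos.2 ⟨a, this⟩
  set e := S.orderIsoOfFin hNdef.symm with hedef
  set E : Fin N → ℝ := fun i => (e i : ℝ) with hEdef
  have hEmono : StrictMono E := fun i j hij => by
    exact_mod_cast e.strictMono hij
  have hES : ∀ i, E i ∈ S := fun i => (e i).2
  have hroot : ∀ x ∈ S, (q * h).eval x = 0 := by
    intro x hx
    rw [hSdef, Multiset.mem_toFinset, mem_roots hqh0] at hx
    exact hx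
  have hSall : ∀ z : ℝ, (q * h).eval z = 0 → z ∈ S := by
    intro z hz
    rw [hSdef, Multiset.mem_toFinset, mem_roots hqh0]
    exact hz
  -- Rolle points
  have hex : ∀ i : Fin (N - 1), ∃ c,
      c ∈ Set.Ioo (E ⟨i.val, by omega⟩) (E ⟨i.val + 1, by omega⟩) ∧ f.eval c = 0 := by
    intro i
    have h01 : (⟨i.val, by omega⟩ : Fin N) < ⟨i.val + 1, by omega⟩ := by
      simp [Fin.lt_def]
    have hxy := hEmono h01
    have hmid : ∀ z ∈ Set.Ioo (E ⟨i.val, by omega⟩) (E ⟨i.val + 1, by omega⟩),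
        (q * h).eval z ≠ 0 := by
      intro z hz h0
      obtain ⟨j, hj⟩ := e.surjective ⟨z, hSall z h0⟩
      have hzj : E j = z := congrArg Subtype.val hj
      have h1 : (⟨i.val, by omega⟩ : Fin N) < j := by
        rw [← hEmono.lt_iff_lt, hzj]; exact hz.1
      have h2 : j < (⟨i.val + 1, by omega⟩ : Fin N) := by
        rw [← hEmono.lt_iff_lt, hzj]; exact hz.2
      rw [Fin.lt_def] at h1 h2
      simp at h1 h2
      omega
    obtain ⟨c, hc, hc0⟩ := rolle_lemma hα hxy
      (hroot _ (hES _)) (hroot _ (hES _)) hmid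
    exact ⟨c, hc, hc0⟩
  set cF : Fin (N - 1) → ℝ := fun i => (hex i).choose with hcFdef
  have hcIoo : ∀ i : Fin (N - 1),
      cF i ∈ Set.Ioo (E ⟨i.val, by omega⟩) (E ⟨i.val + 1, by omega⟩) := fun i => (hex i).choose_spec.1
  have hcroot : ∀ i, f.eval (cF i) = 0 := fun i => (hex i).choose_spec.2
  have hcmono : StrictMono cF := by
    intro i j hij
    have h1 : cF i < E ⟨i.val + 1, by omega⟩ := (hcIoo i).2
    have h2 : E ⟨j.val, by omega⟩ < cF j := (hcIoo j).1
    have h3 : E (⟨i.val + 1, by omega⟩ : Fin N) ≤ E ⟨j.val, by omega⟩ := by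
      apply hEmono.monotone
      rw [Fin.le_def]
      simpa using hij
    linarith
  set R : Finset ℝ := Finset.image cF Finset.univ with hRdef
  have hRcard : R.card = N - 1 := by
    rw [hRdef, Finset.card_image_of_injective _ hcmono.injective, Finset.card_univ,
      Fintype.card_fin]
  have hcnotS : ∀ i, cF i ∉ S := by
    intro i hmem
    obtain ⟨j, hj⟩ := e.surjective ⟨cF i, hmem⟩
    have hzj : E j = cF i := congrArg Subtype.val hj
    have h1 : (⟨i.val, by omega⟩ : Fin N) < j := by
      rw [← hEmono.lt_iff_lt, hzj]; exact (hcIoo i).1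
    have h2 : j < (⟨i.val + 1, by omega⟩ : Fin N) := by
      rw [← hEmono.lt_iff_lt, hzj]; exact (hcIoo i).2
    rw [Fin.lt_def] at h1 h2
    simp at h1 h2
    omega
  have hRS : Disjoint R S := by
    rw [Finset.disjoint_left]
    rintro a ha haS
    obtain ⟨i, -, rfl⟩ := Finset.mem_image.1 ha
    exact hcnotS i haS
  -- the filtered set S'
  set S' : Finset ℝ := S.filter
    (fun a => 1 ≤ rootMultiplicity a q + rootMultiplicity a h - 1) with hS'def
  have hsub : S' ∪ R ⊆ f.roots.toFinset := by
    intro a ha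
    rw [Multiset.mem_toFinset, mem_roots hf]
    rcases Finset.mem_union.1 ha with ha | ha
    · rw [hS'def, Finset.mem_filter] at ha
      have := mult_lemma (q := q) (h := h) α a hf
      rw [← hfdef] at this
      have hpos : 1 ≤ rootMultiplicity a f := by omega
      exact (rootMultiplicity_pos hf).1 (by omega)
    · obtain ⟨i, -, rfl⟩ := Finset.mem_image.1 ha
      exact hcroot i
  -- main counting
  have hsum : f.roots.card = ∑ a ∈ f.roots.toFinset, rootMultiplicity a f := by
    rw [← Multiset.toFinset_sum_count_eq]
    exact Finset.sum_congr rfl (fun a _ => count_roots f)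
  have hge : ∑ a ∈ f.roots.toFinset, rootMultiplicity a f
      ≥ ∑ a ∈ S' ∪ R, rootMultiplicity a f :=
    Finset.sum_le_sum_of_subset hsub
  have hdisj : Disjoint S' R := by
    apply Disjoint.symm
    exact hRS.mono_right (Finset.filter_subset _ _)
  have hsplit : ∑ a ∈ S' ∪ R, rootMultiplicity a f
      = ∑ a ∈ S', rootMultiplicity a f + ∑ a ∈ R, rootMultiplicity a f :=
    Finset.sum_union hdisj
  have hRge : ∑ a ∈ R, rootMultiplicity a f ≥ N - 1 := by
    rw [← hRcard]
    rw [Finset.card_eq_sum_ones]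
    apply Finset.sum_le_sum
    intro a ha
    obtain ⟨i, -, rfl⟩ := Finset.mem_image.1 ha
    exact (rootMultiplicity_pos hf).2 (hcroot i)
  have hS'ge : ∑ a ∈ S', rootMultiplicity a f
      ≥ ∑ a ∈ S, (rootMultiplicity a q + rootMultiplicity a h - 1) := by
    rw [hS'def, ← Finset.sum_filter_add_sum_filter_not S
      (fun a => 1 ≤ rootMultiplicity a q + rootMultiplicity a h - 1)
      (fun a => rootMultiplicity a q + rootMultiplicity a h - 1)]
    have hz : ∑ a ∈ S.filter (fun a => ¬ 1 ≤ rootMultiplicity a q + rootMultiplicity a h - 1),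
        (rootMultiplicity a q + rootMultiplicity a h - 1) = 0 := by
      apply Finset.sum_eq_zero
      intro a ha
      rw [Finset.mem_filter] at ha
      omega
    rw [hz, add_zero]
    apply Finset.sum_le_sum
    intro a ha
    have := mult_lemma (q := q) (h := h) α a hf
    rw [← hfdef] at this
    omega
  have hSq : ∑ a ∈ S, rootMultiplicity a q = q.roots.card := by
    have hsubq : q.roots.toFinset ⊆ S := by
      intro a ha
      rw [hSdef, Multiset.mem_toFinset, roots_mul hqh0, Multiset.mem_add]
      exact Or.inl (Multiset.mem_toFinset.1 ha)
    have h1 : ∑ a ∈ q.roots.toFinset, rootMultiplicity a q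
        = ∑ a ∈ S, rootMultiplicity a q :=
      Finset.sum_subset hsubq (fun x _ hx => by
        rw [← count_roots, Multiset.count_eq_zero]
        exact fun hm => hx (Multiset.mem_toFinset.2 hm))
    have h2 : q.roots.card = ∑ a ∈ q.roots.toFinset, rootMultiplicity a q := by
      rw [← Multiset.toFinset_sum_count_eq]
      exact Finset.sum_congr rfl (fun a _ => count_roots q)
    exact (h2.trans h1).symm
  have hSh : ∑ a ∈ S, rootMultiplicity a h = h.roots.card := by
    have hsubh : h.roots.toFinset ⊆ S := by
      intro a ha
      rw [hSdef, Multiset.mem_toFinset, roots_mul hqh0, Multiset.mem_add]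
      exact Or.inr (Multiset.mem_toFinset.1 ha)
    have h1 : ∑ a ∈ h.roots.toFinset, rootMultiplicity a h
        = ∑ a ∈ S, rootMultiplicity a h :=
      Finset.sum_subset hsubh (fun x _ hx => by
        rw [← count_roots, Multiset.count_eq_zero]
        exact fun hm => hx (Multiset.mem_toFinset.2 hm))
    have h2 : h.roots.card = ∑ a ∈ h.roots.toFinset, rootMultiplicity a h := by
      rw [← Multiset.toFinset_sum_count_eq]
      exact Finset.sum_congr rfl (fun a _ => count_roots h)
    exact (h2.trans h1).symm
  have htsub : ∑ a ∈ S, (rootMultiplicity a q + rootMultiplicity a h)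
      ≤ ∑ a ∈ S, (rootMultiplicity a q + rootMultiplicity a h - 1) + N := by
    rw [hNdef, Finset.card_eq_sum_ones, ← Finset.sum_add_distrib]
    apply Finset.sum_le_sum
    intro a _
    omega
  have hsumqh : ∑ a ∈ S, (rootMultiplicity a q + rootMultiplicity a h)
      = q.roots.card + h.roots.card := by
    rw [Finset.sum_add_distrib, hSq, hSh]
  omega

lemma ZC_mul {p q : Polynomial ℝ} (hp : p ≠ 0) (hq : q ≠ 0) :
    ZC (p * q) = ZC p + ZC q := by
  classical
  have hp' : p.map (algebraMap ℝ ℂ) ≠ 0 :=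
    (Polynomial.map_ne_zero_iff (algebraMap ℝ ℂ).injective).2 hp
  have hq' : q.map (algebraMap ℝ ℂ) ≠ 0 :=
    (Polynomial.map_ne_zero_iff (algebraMap ℝ ℂ).injective).2 hq
  simp only [ZC, Polynomial.map_mul]
  rw [roots_mul (mul_ne_zero hp' hq'), Multiset.filter_add, Multiset.card_add]

lemma ZC_iterate_le (p : Polynomial ℝ) (n : ℕ) : ZC (derivative^[n] p) ≤ ZC p := by
  induction n with
  | zero => simp
  | succ n ih =>
    rw [Function.iterate_succ_apply']
    exact (ZC_derivative_le _).trans ih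

lemma main_lemma {q h : Polynomial ℝ} {α : ℝ} (hα : 0 ≤ α) {r : ℕ} (hr : 1 ≤ r)
    (hq : q.degree = r) (hqroots : q.roots.card = r) :
    ZC (q * derivative h + C α * derivative q * h) ≤ ZC h := by
  by_cases hf : q * derivative h + C α * derivative q * h = 0
  · rw [hf, ZC_zero]; exact Nat.zero_le _
  have hq0 : q ≠ 0 := fun h0 => by simp [h0] at hq
  have hqn : q.natDegree = r := natDegree_eq_of_degree_eq_some hq
  have hh0 : h ≠ 0 := by rintro rfl; simp at hf
  rcases eq_or_lt_of_le hα with hα0 | hαpos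
  · -- α = 0
    have hf' : q * derivative h + C α * derivative q * h = q * derivative h := by
      rw [← hα0]; simp
    rw [hf'] at hf ⊢
    have hh' : derivative h ≠ 0 := by
      intro h0; rw [h0] at hf; simp at hf
    rw [ZC_mul hq0 hh']
    have hZCq : ZC q = 0 := by
      have h1 := ZC_add_ZR hq0
      have h2 : ZR q = r := hqroots
      omega
    rw [hZCq, zero_add]
    have := ZC_derivative_le h
    exact this
  · -- α > 0
    have hcount := count_lemma hαpos (by rw [hqroots]; exact hr) hf
    have hd1 : (q * derivative h).natDegree + 1 ≤ r + h.natDegree := by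
      by_cases hh' : derivative h = 0
      · rw [hh', mul_zero, natDegree_zero]; omega
      · rw [natDegree_mul hq0 hh', hqn, natDegree_derivative_eq' hh']
        have : h.natDegree ≠ 0 := by
          intro h0
          exact hh' (by rw [Polynomial.eq_C_of_natDegree_eq_zero h0]; simp)
        omega
    have hd2 : (C α * derivative q * h).natDegree + 1 ≤ r + h.natDegree := by
      have h1 : (C α * derivative q * h).natDegree
          ≤ (C α * derivative q).natDegree + h.natDegree := natDegree_mul_le
      have h2 : (C α * derivative q).natDegree ≤ (C α).natDegree + (derivative q).natDegree :=
        natDegree_mul_le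
      have h3 : (derivative q).natDegree ≤ q.natDegree - 1 := natDegree_derivative_le q
      have h4 : (C α : Polynomial ℝ).natDegree = 0 := natDegree_C α
      omega
    have hdf : (q * derivative h + C α * derivative q * h).natDegree + 1 ≤ r + h.natDegree := by
      have := natDegree_add_le (q * derivative h) (C α * derivative q * h)
      omega
    have h1 := ZC_add_ZR hf
    have h2 := ZC_add_ZR hh0
    have h3 : ZR q = r := hqroots
    have hcount' : ZR q + ZR h
        ≤ ZR (q * derivative h + C α * derivative q * h) + 1 := hcount
    omega

theorem stmt18 (α : ℝ) (hα : 0 ≤ α) (r : ℕ) (hr : 1 ≤ r)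
    (q : Polynomial ℝ) (hq : q.degree = r) (hqroots : q.roots.card = r)
    (b : ℕ → Polynomial ℝ) (hdeg : ∀ n, (b n).degree = n)
    (γ : ℕ → ℝ)
    (hde : ∀ n, C (γ n) * b n
        = q * derivative^[r] (b n) + C α * derivative q * derivative^[r - 1] (b n))
    (m : ℕ) (d : ℕ → ℝ) :
    ZC (∑ k ∈ Finset.range (m + 1), C (γ k * d k) * b k)
      ≤ ZC (∑ k ∈ Finset.range (m + 1), C (d k) * b k) := by
  set g := ∑ k ∈ Finset.range (m + 1), C (d k) * b k with hgdef
  have hg1 : derivative^[r] g = ∑ k ∈ Finset.range (m + 1), C (d k) * derivative^[r] (b k) := by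
    rw [hgdef, Polynomial.iterate_derivative_sum]
    exact Finset.sum_congr rfl fun k _ => Polynomial.iterate_derivative_C_mul _ _ _
  have hg2 : derivative^[r - 1] g
      = ∑ k ∈ Finset.range (m + 1), C (d k) * derivative^[r - 1] (b k) := by
    rw [hgdef, Polynomial.iterate_derivative_sum]
    exact Finset.sum_congr rfl fun k _ => Polynomial.iterate_derivative_C_mul _ _ _
  have key : ∑ k ∈ Finset.range (m + 1), C (γ k * d k) * b k
      = q * derivative^[r] g + C α * derivative q * derivative^[r - 1] g := by
    rw [hg1, hg2, Finset.mul_sum, Finset.mul_sum, ← Finset.sum_add_distrib]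
    refine Finset.sum_congr rfl fun k _ => ?_
    calc C (γ k * d k) * b k = C (d k) * (C (γ k) * b k) := by
          rw [C_mul]; ring
      _ = C (d k) * (q * derivative^[r] (b k)
            + C α * derivative q * derivative^[r - 1] (b k)) := by rw [hde k]
      _ = q * (C (d k) * derivative^[r] (b k))
            + C α * derivative q * (C (d k) * derivative^[r - 1] (b k)) := by ring
  rw [key]
  have hiter : derivative^[r] g = derivative (derivative^[r - 1] g) := by
    conv_lhs => rw [show r = (r - 1) + 1 by omega]
    rw [Function.iterate_succ_apply']
  rw [hiter]
  exact (main_lemma hα hr hq hqroots).trans (ZC_iterate_le g (r - 1))
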